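/- Let F : ℝᵃ × ℝᵃ × ℝᵇ → ℝ and G : ℝᵃ × ℝᵃ → ℝ be differentiable with L_F- and L_G-Lipschitz continuous gradients respectively (with respect to the Euclidean norm on the product space), and let H₂ ∈ ℝ^{a×a}. Let p, p⁺, q⁻, q, q⁺ ∈ ℝᵃ and t⁻, t ∈ ℝᵇ, and define λ = −∇_q F(p, q, t⁻) − ∇_q G(p, q) − H₂(q − q⁻) and λ⁺ = −∇_q F(p⁺, q⁺, t) − ∇_q G(p⁺, q⁺) − H₂(q⁺ − q), where ∇_q denotes the partial gradient with respect to the second ℝᵃ-block. Then ‖λ⁺ − λ‖² ≤ 4(L_F² + L_G²)‖p⁺ − p‖² + 4L_F²‖t − t⁻‖² + 4(q⁺ − q)ᵀ((L_F² + L_G²)I + H₂ᵀH₂)(q⁺ − q) + 4(q − q⁻)ᵀ H₂ᵀH₂ (q − q⁻). -/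

import Mathlib

open Matrix RealInnerProductSpace

variable {a b : ℕ}

/-- The quadratic form `v ↦ vᵀMv` of a matrix `M`, evaluated on a Euclidean vector. -/
noncomputable def quadForm (M : Matrix (Fin a) (Fin a) ℝ) (v : EuclideanSpace ℝ (Fin a)) : ℝ :=
  (fun i => v i) ⬝ᵥ (M *ᵥ fun i => v i)

/-- Matrix–vector multiplication acting on Euclidean vectors. -/
noncomputable def matVec (M : Matrix (Fin a) (Fin a) ℝ) (v : EuclideanSpace ℝ (Fin a)) :
    EuclideanSpace ℝ (Fin a) :=
  (WithLp.equiv 2 (Fin a → ℝ)).symm (M *ᵥ (WithLp.equiv 2 (Fin a → ℝ) v))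

/-- Partial gradient `∇_p F(p,q,t)` with respect to the first block. -/
noncomputable def gradP (F : EuclideanSpace ℝ (Fin a) → EuclideanSpace ℝ (Fin a) →
    EuclideanSpace ℝ (Fin b) → ℝ) (p q : EuclideanSpace ℝ (Fin a))
    (t : EuclideanSpace ℝ (Fin b)) : EuclideanSpace ℝ (Fin a) :=
  gradient (fun p' => F p' q t) p

/-- Partial gradient `∇_q F(p,q,t)` with respect to the second block. -/
noncomputable def gradQ (F : EuclideanSpace ℝ (Fin a) → EuclideanSpace ℝ (Fin a) →
    EuclideanSpace ℝ (Fin b) → ℝ) (p q : EuclideanSpace ℝ (Fin a))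
    (t : EuclideanSpace ℝ (Fin b)) : EuclideanSpace ℝ (Fin a) :=
  gradient (fun q' => F p q' t) q

/-- Partial gradient `∇_t F(p,q,t)` with respect to the third block. -/
noncomputable def gradT (F : EuclideanSpace ℝ (Fin a) → EuclideanSpace ℝ (Fin a) →
    EuclideanSpace ℝ (Fin b) → ℝ) (p q : EuclideanSpace ℝ (Fin a))
    (t : EuclideanSpace ℝ (Fin b)) : EuclideanSpace ℝ (Fin b) :=
  gradient (fun t' => F p q t') t

/-- Partial gradient `∇_p G(p,q)` with respect to the first block. -/
noncomputable def gradPG (G : EuclideanSpace ℝ (Fin a) → EuclideanSpace ℝ (Fin a) → ℝ)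
    (p q : EuclideanSpace ℝ (Fin a)) : EuclideanSpace ℝ (Fin a) :=
  gradient (fun p' => G p' q) p

/-- Partial gradient `∇_q G(p,q)` with respect to the second block. -/
noncomputable def gradQG (G : EuclideanSpace ℝ (Fin a) → EuclideanSpace ℝ (Fin a) → ℝ)
    (p q : EuclideanSpace ℝ (Fin a)) : EuclideanSpace ℝ (Fin a) :=
  gradient (fun q' => G p q') q


lemma matVec_sub (M : Matrix (Fin a) (Fin a) ℝ) (u v : EuclideanSpace ℝ (Fin a)) :
    matVec M (u - v) = matVec M u - matVec M v := by
  ext i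
  simp [matVec, Matrix.mulVec_sub]

lemma norm_sq_eq_dot (v : EuclideanSpace ℝ (Fin a)) :
    ‖v‖ ^ 2 = (fun i => v i) ⬝ᵥ (fun i => v i) := by
  rw [← real_inner_self_eq_norm_sq]
  simp [EuclideanSpace.inner_eq_star_dotProduct, dotProduct]
  rw [EuclideanSpace.norm_sq_eq]; simp [sq]

lemma norm_matVec_sq (M : Matrix (Fin a) (Fin a) ℝ) (v : EuclideanSpace ℝ (Fin a)) :
    ‖matVec M v‖ ^ 2 = quadForm (Mᵀ * M) v := by
  rw [norm_sq_eq_dot, quadForm]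
  have h : (fun i => matVec M v i) = M *ᵥ (fun i => v i) := rfl
  rw [h]
  conv_rhs => rw [← Matrix.mulVec_mulVec, Matrix.dotProduct_mulVec, Matrix.vecMul_transpose]

lemma quadForm_add_smul_one (c : ℝ) (M : Matrix (Fin a) (Fin a) ℝ)
    (v : EuclideanSpace ℝ (Fin a)) :
    quadForm (c • (1 : Matrix (Fin a) (Fin a) ℝ) + M) v = c * ‖v‖ ^ 2 + quadForm M v := by
  rw [norm_sq_eq_dot, quadForm, quadForm, Matrix.add_mulVec, dotProduct_add,
    Matrix.smul_mulVec, Matrix.one_mulVec, dotProduct_smul]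
  simp

set_option maxHeartbeats 1000000 in
/-- Lemma 5.1 of the paper: bound on the iterative residual of the dual variable of
PieADMM in terms of the primal residuals.  `F` and `G` are differentiable with `L_F`-
resp. `L_G`-Lipschitz gradients with respect to the Euclidean norm of the product space
(the gradient of `F` is the triple of partial gradients, that of `G` the pair). -/
theorem stmt12
    (F : EuclideanSpace ℝ (Fin a) → EuclideanSpace ℝ (Fin a) → EuclideanSpace ℝ (Fin b) → ℝ)
    (G : EuclideanSpace ℝ (Fin a) → EuclideanSpace ℝ (Fin a) → ℝ) (LF LG : ℝ)
    (hFdiff : Differentiable ℝ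
      (fun x : EuclideanSpace ℝ (Fin a) × EuclideanSpace ℝ (Fin a) × EuclideanSpace ℝ (Fin b) =>
        F x.1 x.2.1 x.2.2))
    (hGdiff : Differentiable ℝ
      (fun x : EuclideanSpace ℝ (Fin a) × EuclideanSpace ℝ (Fin a) => G x.1 x.2))
    (hFlip : ∀ (p q p' q' : EuclideanSpace ℝ (Fin a)) (t t' : EuclideanSpace ℝ (Fin b)),
      Real.sqrt (‖gradP F p q t - gradP F p' q' t'‖ ^ 2 + ‖gradQ F p q t - gradQ F p' q' t'‖ ^ 2
          + ‖gradT F p q t - gradT F p' q' t'‖ ^ 2)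
        ≤ LF * Real.sqrt (‖p - p'‖ ^ 2 + ‖q - q'‖ ^ 2 + ‖t - t'‖ ^ 2))
    (hGlip : ∀ p q p' q' : EuclideanSpace ℝ (Fin a),
      Real.sqrt (‖gradPG G p q - gradPG G p' q'‖ ^ 2 + ‖gradQG G p q - gradQG G p' q'‖ ^ 2)
        ≤ LG * Real.sqrt (‖p - p'‖ ^ 2 + ‖q - q'‖ ^ 2))
    (H2 : Matrix (Fin a) (Fin a) ℝ)
    (p pp qm q qp : EuclideanSpace ℝ (Fin a)) (tm t : EuclideanSpace ℝ (Fin b))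
    (lam lamp : EuclideanSpace ℝ (Fin a))
    (hlam : lam = -gradQ F p q tm - gradQG G p q - matVec H2 (q - qm))
    (hlamp : lamp = -gradQ F pp qp t - gradQG G pp qp - matVec H2 (qp - q)) :
    ‖lamp - lam‖ ^ 2
      ≤ 4 * (LF ^ 2 + LG ^ 2) * ‖pp - p‖ ^ 2 + 4 * LF ^ 2 * ‖t - tm‖ ^ 2
        + 4 * quadForm ((LF ^ 2 + LG ^ 2) • (1 : Matrix (Fin a) (Fin a) ℝ) + H2ᵀ * H2) (qp - q)
        + 4 * quadForm (H2ᵀ * H2) (q - qm) := by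
  -- abbreviations
  set A := gradQ F pp qp t - gradQ F p q tm with hA
  set B := gradQG G pp qp - gradQG G p q with hB
  set C := matVec H2 (qp - q) with hC
  set D := matVec H2 (q - qm) with hD
  have hdiff : lamp - lam = -A - B - C + D := by
    rw [hlam, hlamp, hA, hB, hC, hD]
    abel
  have htri : ‖lamp - lam‖ ≤ ‖A‖ + ‖B‖ + ‖C‖ + ‖D‖ := by
    rw [hdiff]
    calc ‖-A - B - C + D‖ ≤ ‖-A - B - C‖ + ‖D‖ := norm_add_le _ _
      _ ≤ ‖-A - B‖ + ‖C‖ + ‖D‖ := by gcongr; exact norm_sub_le _ _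
      _ ≤ ‖-A‖ + ‖B‖ + ‖C‖ + ‖D‖ := by gcongr; exact norm_sub_le _ _
      _ = ‖A‖ + ‖B‖ + ‖C‖ + ‖D‖ := by rw [norm_neg]
  -- Lipschitz bounds
  have hAbd : ‖A‖ ^ 2 ≤ LF ^ 2 * (‖pp - p‖ ^ 2 + ‖qp - q‖ ^ 2 + ‖t - tm‖ ^ 2) := by
    have h := hFlip pp qp p q t tm
    have h1 : (0:ℝ) ≤ ‖gradP F pp qp t - gradP F p q tm‖ ^ 2 + ‖A‖ ^ 2
        + ‖gradT F pp qp t - gradT F p q tm‖ ^ 2 := by positivity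
    have h2 := Real.sq_sqrt h1
    have h3 := Real.sq_sqrt (show (0:ℝ) ≤ ‖pp - p‖ ^ 2 + ‖qp - q‖ ^ 2 + ‖t - tm‖ ^ 2 by positivity)
    nlinarith [Real.sqrt_nonneg (‖gradP F pp qp t - gradP F p q tm‖ ^ 2 + ‖A‖ ^ 2
        + ‖gradT F pp qp t - gradT F p q tm‖ ^ 2),
      Real.sqrt_nonneg (‖pp - p‖ ^ 2 + ‖qp - q‖ ^ 2 + ‖t - tm‖ ^ 2),
      sq_nonneg (‖gradP F pp qp t - gradP F p q tm‖),
      sq_nonneg (‖gradT F pp qp t - gradT F p q tm‖)]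
  have hBbd : ‖B‖ ^ 2 ≤ LG ^ 2 * (‖pp - p‖ ^ 2 + ‖qp - q‖ ^ 2) := by
    have h := hGlip pp qp p q
    have h1 : (0:ℝ) ≤ ‖gradPG G pp qp - gradPG G p q‖ ^ 2 + ‖B‖ ^ 2 := by positivity
    have h2 := Real.sq_sqrt h1
    have h3 := Real.sq_sqrt (show (0:ℝ) ≤ ‖pp - p‖ ^ 2 + ‖qp - q‖ ^ 2 by positivity)
    nlinarith [Real.sqrt_nonneg (‖gradPG G pp qp - gradPG G p q‖ ^ 2 + ‖B‖ ^ 2),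
      Real.sqrt_nonneg (‖pp - p‖ ^ 2 + ‖qp - q‖ ^ 2),
      sq_nonneg (‖gradPG G pp qp - gradPG G p q‖)]
  have hCq : ‖C‖ ^ 2 = quadForm (H2ᵀ * H2) (qp - q) := norm_matVec_sq H2 _
  have hDq : ‖D‖ ^ 2 = quadForm (H2ᵀ * H2) (q - qm) := norm_matVec_sq H2 _
  rw [quadForm_add_smul_one]
  have hsq : ‖lamp - lam‖ ^ 2 ≤ 4 * (‖A‖ ^ 2 + ‖B‖ ^ 2 + ‖C‖ ^ 2 + ‖D‖ ^ 2) := by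
    nlinarith [norm_nonneg (lamp - lam), norm_nonneg A, norm_nonneg B, norm_nonneg C,
      norm_nonneg D, sq_nonneg (‖A‖ - ‖B‖), sq_nonneg (‖A‖ - ‖C‖), sq_nonneg (‖A‖ - ‖D‖),
      sq_nonneg (‖B‖ - ‖C‖), sq_nonneg (‖B‖ - ‖D‖), sq_nonneg (‖C‖ - ‖D‖)]
  nlinarith [hAbd, hBbd, hCq, hDq, hsq]
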